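/- The set of detectable errors of an ((n,K:M))_q hybrid code forms a complex vector subspace of B(H), H = (C^q)^{⊗n}, of dimension q^{2n} - (MK)^2 + M. -/

import Mathlib

set_option linter.unusedSectionVars false
set_option linter.unusedVariables false
set_option maxHeartbeats 1000000
set_option synthInstance.maxHeartbeats 1000000

open Matrix Module
section helpers

variable {m : Type*} [Fintype m] [DecidableEq m]

noncomputable def sandwich (A B : Matrix m m ℂ) : Matrix m m ℂ →ₗ[ℂ] Matrix m m ℂ where
  toFun X := A * X * B
  map_add' X Y := by simp [Matrix.mul_add, Matrix.add_mul]
  map_smul' c X := by simp [Matrix.mul_smul, Matrix.smul_mul]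

@[simp] lemma sandwich_apply (A B X : Matrix m m ℂ) : sandwich A B X = A * X * B := rfl

noncomputable def suppMod (v : m → ℝ) : Submodule ℂ (Matrix m m ℂ) where
  carrier := {X | ∀ i j, ¬(v i ≠ 0 ∧ v j ≠ 0) → X i j = 0}
  add_mem' := by intro a b ha hb i j h; simp [Matrix.add_apply, ha i j h, hb i j h]
  zero_mem' := by intro i j h; simp
  smul_mem' := by intro c a ha i j h; simp [Matrix.smul_apply, ha i j h]

lemma mem_suppMod {v : m → ℝ} {X : Matrix m m ℂ} :
    X ∈ suppMod v ↔ ∀ i j, ¬(v i ≠ 0 ∧ v j ≠ 0) → X i j = 0 := Iff.rfl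

noncomputable def suppModEquiv (v : m → ℝ) :
    suppMod v ≃ₗ[ℂ] Matrix {i // v i ≠ 0} {i // v i ≠ 0} ℂ where
  toFun X := fun i j => (X : Matrix m m ℂ) i.1 j.1
  map_add' X Y := rfl
  map_smul' c X := rfl
  invFun Y := ⟨fun i j => if h : v i ≠ 0 ∧ v j ≠ 0 then Y ⟨i, h.1⟩ ⟨j, h.2⟩ else 0,
    by intro i j h; simp [h]⟩
  left_inv X := by
    ext i j
    by_cases h : v i ≠ 0 ∧ v j ≠ 0
    · simp [h]
    · simp [h, X.2 i j h]
  right_inv Y := by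
    ext i j
    simp [i.2, j.2]

lemma finrank_suppMod (v : m → ℝ) :
    finrank ℂ (suppMod v) = (Fintype.card {i // v i ≠ 0}) ^ 2 := by
  rw [(suppModEquiv v).finrank_eq, finrank_matrix, Module.finrank_self, mul_one, sq]

lemma eig01 {Q : Matrix m m ℂ} (hherm : Q.IsHermitian) (hproj : Q * Q = Q) :
    ∀ i, hherm.eigenvalues i = 0 ∨ hherm.eigenvalues i = 1 := by
  intro i
  set U : Matrix m m ℂ := (hherm.eigenvectorUnitary : Matrix m m ℂ) with hU
  have hUU : star U * U = 1 := Matrix.UnitaryGroup.star_mul_self _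
  set d : m → ℂ := RCLike.ofReal ∘ hherm.eigenvalues with hd
  have hspec : Q = U * diagonal d * star U := hherm.spectral_theorem
  have cancel : ∀ A : Matrix m m ℂ, star U * (U * A * star U) * U = A := by
    intro A
    calc star U * (U * A * star U) * U = (star U * U) * A * (star U * U) := by
          simp only [Matrix.mul_assoc]
      _ = A := by rw [hUU]; simp
  have h2 : U * (diagonal d * diagonal d) * star U = U * diagonal d * star U := by
    calc U * (diagonal d * diagonal d) * star U
        = (U * diagonal d * star U) * (U * diagonal d * star U) := by
          rw [show (U * diagonal d * star U) * (U * diagonal d * star U)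
              = U * (diagonal d * (star U * U) * diagonal d) * star U by
            simp only [Matrix.mul_assoc], hUU]
          simp [Matrix.mul_assoc]
      _ = U * diagonal d * star U := by rw [← hspec]; exact hproj
  have h3 : diagonal (fun i => d i * d i) = diagonal d := by
    rw [← diagonal_mul_diagonal]
    calc diagonal d * diagonal d
        = star U * (U * (diagonal d * diagonal d) * star U) * U := (cancel _).symm
      _ = star U * (U * diagonal d * star U) * U := by rw [h2]
      _ = diagonal d := cancel _
  have h4 : d i * d i = d i := congrFun (Matrix.diagonal_injective h3) i
  have hre : hherm.eigenvalues i * hherm.eigenvalues i = hherm.eigenvalues i := by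
    have : (hherm.eigenvalues i : ℂ) * hherm.eigenvalues i = hherm.eigenvalues i := h4
    exact_mod_cast this
  have h5 : hherm.eigenvalues i * (hherm.eigenvalues i - 1) = 0 := by linear_combination hre
  rcases mul_eq_zero.mp h5 with h | h
  · exact Or.inl h
  · exact Or.inr (by linarith)

lemma trace_eq_rank {Q : Matrix m m ℂ} (hherm : Q.IsHermitian) (hproj : Q * Q = Q) :
    Q.trace = (Q.rank : ℂ) := by
  set U : Matrix m m ℂ := (hherm.eigenvectorUnitary : Matrix m m ℂ) with hU
  have hUU : star U * U = 1 := Matrix.UnitaryGroup.star_mul_self _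
  set d : m → ℂ := RCLike.ofReal ∘ hherm.eigenvalues with hd
  have htr : Q.trace = ∑ i, d i := by
    conv_lhs => rw [show Q = (hherm.eigenvectorUnitary : Matrix m m ℂ) * diagonal d *
      star (hherm.eigenvectorUnitary : Matrix m m ℂ) from hherm.spectral_theorem]
    rw [← hU, Matrix.trace_mul_cycle, hUU, Matrix.one_mul, Matrix.trace_diagonal]
  rw [htr, hherm.rank_eq_card_non_zero_eigs]
  have h01 := eig01 hherm hproj
  rw [Fintype.card_subtype]
  rw [← Finset.sum_filter_of_ne (p := fun i => hherm.eigenvalues i ≠ 0)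
    (by intro i _ hne h0; exact hne (by simp [hd, h0]))]
  rw [Finset.sum_congr rfl (fun i hi => ?_), Finset.sum_const, nsmul_eq_mul, mul_one]
  have : hherm.eigenvalues i = 1 := by
    rcases h01 i with h | h
    · exact absurd h (Finset.mem_filter.mp hi).2
    · exact h
  simp [hd, this]

lemma finrank_range_sandwich {Q : Matrix m m ℂ} (hherm : Q.IsHermitian) (hproj : Q * Q = Q) :
    finrank ℂ (LinearMap.range (sandwich Q Q)) = Q.rank ^ 2 := by
  classical
  set U : Matrix m m ℂ := (hherm.eigenvectorUnitary : Matrix m m ℂ) with hU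
  have hUU : star U * U = 1 := Matrix.UnitaryGroup.star_mul_self _
  have hUU' : U * star U = 1 := (Matrix.mem_unitaryGroup_iff).mp hherm.eigenvectorUnitary.2
  set d : m → ℂ := RCLike.ofReal ∘ hherm.eigenvalues with hd
  set D : Matrix m m ℂ := diagonal d with hD
  have hspec : Q = U * D * star U := hherm.spectral_theorem
  have h01 := eig01 hherm hproj
  -- the conjugation equivalence
  have hc1 : (sandwich (star U) U).comp (sandwich U (star U)) = LinearMap.id := by
    refine LinearMap.ext fun X => ?_
    show star U * (U * X * star U) * U = X
    calc star U * (U * X * star U) * U = (star U * U) * X * (star U * U) := by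
          simp only [Matrix.mul_assoc]
      _ = X := by rw [hUU]; simp
  have hc2 : (sandwich U (star U)).comp (sandwich (star U) U) = LinearMap.id := by
    refine LinearMap.ext fun X => ?_
    show U * (star U * X * U) * star U = X
    calc U * (star U * X * U) * star U = (U * star U) * X * (U * star U) := by
          simp only [Matrix.mul_assoc]
      _ = X := by rw [hUU']; simp
  set e : Matrix m m ℂ ≃ₗ[ℂ] Matrix m m ℂ :=
    LinearEquiv.ofLinear (sandwich (star U) U) (sandwich U (star U)) hc1 hc2 with he
  -- fixed point characterization
  have hfix : ∀ X, X ∈ LinearMap.range (sandwich Q Q) ↔ Q * X * Q = X := by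
    intro X
    constructor
    · rintro ⟨Y, rfl⟩
      show Q * (Q * Y * Q) * Q = Q * Y * Q
      calc Q * (Q * Y * Q) * Q = (Q * Q) * Y * (Q * Q) := by simp only [Matrix.mul_assoc]
        _ = Q * Y * Q := by rw [hproj]
    · intro hX; exact ⟨X, hX⟩
  -- conjugation identities
  have hQU : Q * U = U * D := by
    rw [hspec]; calc U * D * star U * U = U * D * (star U * U) := by simp only [Matrix.mul_assoc]
      _ = U * D := by rw [hUU]; simp [Matrix.mul_assoc]
  have hUQ : star U * Q = D * star U := by
    rw [hspec]
    calc star U * (U * D * star U) = (star U * U) * D * star U := by simp only [Matrix.mul_assoc]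
      _ = D * star U := by rw [hUU]; simp
  have hkey : LinearMap.range (sandwich Q Q)
      = Submodule.comap (e : Matrix m m ℂ →ₗ[ℂ] Matrix m m ℂ) (suppMod hherm.eigenvalues) := by
    ext X
    rw [hfix, Submodule.mem_comap]
    have hconj : (e : Matrix m m ℂ →ₗ[ℂ] Matrix m m ℂ) X = star U * X * U := rfl
    rw [hconj]
    set Z : Matrix m m ℂ := star U * X * U with hZ
    have hXZ : U * Z * star U = X := by
      rw [hZ]
      calc U * (star U * X * U) * star U = (U * star U) * X * (U * star U) := by
            simp only [Matrix.mul_assoc]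
        _ = X := by rw [hUU']; simp
    have hQXQ : star U * (Q * X * Q) * U = D * Z * D := by
      calc star U * (Q * X * Q) * U = (star U * Q) * X * (Q * U) := by
            simp only [Matrix.mul_assoc]
        _ = (D * star U) * X * (U * D) := by rw [hUQ, hQU]
        _ = D * Z * D := by rw [hZ]; simp only [Matrix.mul_assoc]
    constructor
    · intro hX
      rw [mem_suppMod]
      intro i j hij
      have hZfix : D * Z * D = Z := by rw [← hQXQ, hX]
      have hentry : d i * Z i j * d j = Z i j := by
        have := congrFun (congrFun hZfix i) j
        simpa [hD, Matrix.diagonal_mul, Matrix.mul_diagonal, mul_comm, mul_assoc, mul_left_comm]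
          using this
      rcases not_and_or.mp hij with h | h
      · have h0 : hherm.eigenvalues i = 0 := not_not.mp h
        rw [← hentry]; simp [hd, h0]
      · have h0 : hherm.eigenvalues j = 0 := not_not.mp h
        rw [← hentry]; simp [hd, h0]
    · intro hZmem
      have hZfix : D * Z * D = Z := by
        ext i j
        rw [show (D * Z * D) i j = d i * Z i j * d j by
          simp [hD, Matrix.diagonal_mul, Matrix.mul_diagonal, mul_assoc]]
        by_cases h : hherm.eigenvalues i ≠ 0 ∧ hherm.eigenvalues j ≠ 0
        · have hi1 : hherm.eigenvalues i = 1 := (h01 i).resolve_left h.1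
          have hj1 : hherm.eigenvalues j = 1 := (h01 j).resolve_left h.2
          simp [hd, hi1, hj1]
        · rw [mem_suppMod] at hZmem
          rw [hZmem i j h]; ring
      calc Q * X * Q = U * (star U * (Q * X * Q) * U) * star U := by
            calc Q * X * Q
                = (U * star U) * (Q * X * Q) * (U * star U) := by rw [hUU']; simp
              _ = U * (star U * (Q * X * Q) * U) * star U := by simp only [Matrix.mul_assoc]
        _ = U * (D * Z * D) * star U := by rw [hQXQ]
        _ = U * Z * star U := by rw [hZfix]
        _ = X := hXZ
  rw [hkey, Submodule.comap_equiv_eq_map_symm, LinearEquiv.finrank_map_eq, finrank_suppMod,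
    hherm.rank_eq_card_non_zero_eigs]

end helpers

theorem stmt_0 (q n K M : ℕ) (hq : 0 < q) (hK : 0 < K) (hM : 0 < M)
    (P : Fin M → Matrix (Fin (q ^ n)) (Fin (q ^ n)) ℂ)
    (hproj : ∀ a, P a * P a = P a) (hherm : ∀ a, (P a)ᴴ = P a)
    (hrank : ∀ a, (P a).rank = K)
    (horth : ∀ a b, a ≠ b → P a * P b = 0) :
    ∃ D : Submodule ℂ (Matrix (Fin (q ^ n)) (Fin (q ^ n)) ℂ),
      (D : Set (Matrix (Fin (q ^ n)) (Fin (q ^ n)) ℂ)) =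
        {E | (∀ a, ∃ lam : ℂ, P a * E * P a = lam • P a) ∧
          ∀ a b, a ≠ b → P b * E * P a = 0} ∧
      Module.finrank ℂ D = q ^ (2 * n) - (M * K) ^ 2 + M := by
  classical
  set Q : Matrix (Fin (q ^ n)) (Fin (q ^ n)) ℂ := ∑ a, P a with hQ
  have hPne : ∀ a, P a ≠ 0 := by
    intro a h
    have := hrank a
    rw [h, Matrix.rank_zero] at this
    omega
  have hQherm : Q.IsHermitian := by
    unfold Matrix.IsHermitian
    rw [hQ, Matrix.conjTranspose_sum]
    exact Finset.sum_congr rfl fun a _ => hherm a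
  have hQproj : Q * Q = Q := by
    rw [hQ, Finset.sum_mul_sum]
    rw [Finset.sum_congr rfl fun a _ => Finset.sum_eq_single a
      (fun b _ hb => horth a b (Ne.symm hb)) (by simp)]
    exact Finset.sum_congr rfl fun a _ => hproj a
  have hPQ : ∀ a, P a * Q = P a := by
    intro a
    rw [hQ, Finset.mul_sum, Finset.sum_eq_single a
      (fun b _ hb => horth a b (Ne.symm hb)) (by simp), hproj a]
  have hQP : ∀ a, Q * P a = P a := by
    intro a
    rw [hQ, Finset.sum_mul, Finset.sum_eq_single a
      (fun b _ hb => horth b a hb) (by simp), hproj a]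
  set T := sandwich Q Q with hT
  set S : Submodule ℂ (Matrix (Fin (q ^ n)) (Fin (q ^ n)) ℂ) :=
    Submodule.span ℂ (Set.range P) with hS
  have hSle : S ≤ LinearMap.range T := by
    rw [hS, Submodule.span_le]
    rintro _ ⟨a, rfl⟩
    exact ⟨P a, by rw [sandwich_apply, hQP a, hPQ a]⟩
  refine ⟨Submodule.comap T S, ?_, ?_⟩
  · ext E
    simp only [SetLike.mem_coe, Submodule.mem_comap, Set.mem_setOf_eq]
    have hTE : T E = Q * E * Q := rfl
    constructor
    · intro hmem
      rw [hTE, hS] at hmem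
      obtain ⟨c, hc⟩ := (Submodule.mem_span_range_iff_exists_fun ℂ).mp hmem
      have key : ∀ a b, P b * E * P a = c b • (P b * P a) := by
        intro a b
        have h1 : P b * E * P a = P b * (Q * E * Q) * P a := by
          rw [show P b * (Q * E * Q) * P a = (P b * Q) * E * (Q * P a) by
            simp only [Matrix.mul_assoc], hPQ b, hQP a]
        rw [h1, ← hc]
        have hsum : P b * (∑ i, c i • P i) * P a = ∑ i, c i • (P b * P i * P a) := by
          rw [Finset.mul_sum, Finset.sum_mul]
          exact Finset.sum_congr rfl fun i _ => by rw [mul_smul_comm, smul_mul_assoc]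
        rw [hsum, Finset.sum_eq_single b
          (fun i _ hi => by rw [horth b i (Ne.symm hi), Matrix.zero_mul, smul_zero])
          (by simp), hproj b]
      constructor
      · intro a
        exact ⟨c a, by rw [key a a, hproj a]⟩
      · intro a b hab
        rw [key a b, horth b a (Ne.symm hab), smul_zero]
    · rintro ⟨hdiag, hoff⟩
      choose lam hlam using hdiag
      rw [hTE, hS]
      apply (Submodule.mem_span_range_iff_exists_fun ℂ).mpr
      refine ⟨lam, ?_⟩
      rw [hQ, Finset.sum_mul, Finset.sum_mul_sum]
      symm
      refine Finset.sum_congr rfl fun b _ => ?_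
      rw [Finset.sum_eq_single b (fun a _ ha => hoff a b ha) (by simp), hlam b]
  · -- dimension count
    have hfd : FiniteDimensional ℂ (Matrix (Fin (q ^ n)) (Fin (q ^ n)) ℂ) := by infer_instance
    -- rank of Q
    have hQrank : Q.rank = M * K := by
      have htr : Q.trace = ((M * K : ℕ) : ℂ) := by
        rw [hQ, Matrix.trace_sum]
        rw [Finset.sum_congr rfl fun a _ => (trace_eq_rank (hherm a) (hproj a)).trans
          (by rw [hrank a])]
        simp [mul_comm]
      have := (trace_eq_rank hQherm hQproj).symm.trans htr
      exact_mod_cast this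
    have hrangeT : finrank ℂ (LinearMap.range T) = (M * K) ^ 2 := by
      rw [hT, finrank_range_sandwich hQherm hQproj, hQrank]
    have hSrank : finrank ℂ S = M := by
      have hli : LinearIndependent ℂ P := by
        rw [Fintype.linearIndependent_iff]
        intro g hg b
        have h1 : P b * (∑ a, g a • P a) = 0 := by rw [hg, Matrix.mul_zero]
        rw [Finset.mul_sum, Finset.sum_congr rfl (fun a _ => mul_smul_comm (g a) (P b) (P a)),
          Finset.sum_eq_single b (fun a _ ha => by rw [horth b a (Ne.symm ha)]; simp)
            (by simp), hproj b] at h1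
        rcases smul_eq_zero.mp h1 with h | h
        · exact h
        · exact absurd h (hPne b)
      rw [hS, finrank_span_eq_card hli, Fintype.card_fin]
    -- rank-nullity pieces
    have hkerle : LinearMap.ker T ≤ Submodule.comap T S := by
      intro x hx
      rw [Submodule.mem_comap, LinearMap.mem_ker.mp hx]
      exact S.zero_mem
    have h1 : finrank ℂ (Submodule.comap T S) = (M * K) ^ 2 - (M * K) ^ 2 + M +
        finrank ℂ (LinearMap.ker T) := by
      have hrn := LinearMap.finrank_range_add_finrank_ker (T.domRestrict (Submodule.comap T S))
      rw [LinearMap.range_domRestrict, Submodule.map_comap_eq, inf_eq_right.mpr hSle,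
        LinearMap.ker_domRestrict, hSrank] at hrn
      rw [(Submodule.comapSubtypeEquivOfLe hkerle).finrank_eq] at hrn
      omega
    have h2 := LinearMap.finrank_range_add_finrank_ker T
    rw [hrangeT] at h2
    rw [finrank_matrix, Module.finrank_self, mul_one, Fintype.card_fin] at h2
    have hbig : q ^ (2 * n) = q ^ n * q ^ n := by rw [two_mul, pow_add]
    rw [h1]
    omega
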